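/- Fix distinct i, j ∈ {2, …, N}. Let h_i, h_j ∈ 𝓡 depend only on the variables v_{x^α} with α ≥ 1; set g_i := δh_i/δv_x, g_j := δh_j/δv_x, a_{ij} := Σ_{α≥0} v_{x^α t_j}·(δh_i/δv_{x^{α+1}}), a_{ji} := Σ_{α≥0} v_{x^α t_i}·(δh_j/δv_{x^{α+1}}), and suppose b_{ij}, b_{ji} ∈ 𝓡 satisfy D_x(b_{ij}) = D_x(g_i)·g_j and D_x(b_{ji}) = D_x(g_j)·g_i. Define L_{1i} := (1/2)v_x v_{t_i} − h_i, L_{ij} := (1/2)(v_{t_i}·g_j − v_{t_j}·g_i) + (a_{ij} − a_{ji}) − (1/2)(b_{ij} − b_{ji}), and L_{ji} := −L_{ij}. Then the following identities hold in 𝓡: (i) δ_{1i}L_{1i}/δv = −v_{x t_i} + D_x(g_i), so the multi-time Euler–Lagrange equation δ_{1i}L_{1i}/δv = 0 is the differentiated potential KdV equation v_{x t_i} = D_x(g_i); and (ii) δ_{1i}L_{1i}/δv_x − δ_{ij}L_{ji}/δv_{t_j} = (1/2)(v_{t_i} − g_i), so the multi-time Euler–Lagrange equation δ_{1i}L_{1i}/δv_x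 = δ_{ij}L_{ji}/δv_{t_j} is exactly the potential KdV equation v_{t_i} = g_i. -/
import Mathlib


open MvPolynomial

noncomputable section

/-- The ring `𝓡` of differential polynomials of a field `v` in independent variables
`t_1, …, t_N`: the polynomial ring over `ℝ` in commuting variables `v_I` indexed by
multi-indices `I : Fin N → ℕ`. -/
abbrev DiffPoly (N : ℕ) := MvPolynomial (Fin N → ℕ) ℝ

/-- The total derivative `D_m`, determined by `D_m (v_I) = v_{I + e_m}`. -/
noncomputable def totalDeriv {N : ℕ} (m : Fin N) :
    Derivation ℝ (DiffPoly N) (DiffPoly N) :=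
  MvPolynomial.mkDerivation ℝ fun I => X (I + Pi.single m 1)

/-- The x-variational derivative `δf/δv_I = Σ_α (−1)^α D_x^α (∂f/∂v_{I+α·e_x})`,
where `x` is the coordinate direction playing the role of `t_1`. -/
noncomputable def varDeriv {N : ℕ} (x : Fin N) (I : Fin N → ℕ) (f : DiffPoly N) :
    DiffPoly N :=
  ∑ᶠ α : ℕ, (-1 : ℝ) ^ α • (fun p => totalDeriv x p)^[α] (pderiv (I + α • Pi.single x 1) f)

/-- The (m,l)-variational derivative
`δ_{ml}f/δv_I = Σ_{α,β} (−1)^{α+β} D_m^α D_l^β (∂f/∂v_{I+α·e_m+β·e_l})`. -/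
noncomputable def varDeriv2 {N : ℕ} (m l : Fin N) (I : Fin N → ℕ) (f : DiffPoly N) :
    DiffPoly N :=
  ∑ᶠ α : ℕ, ∑ᶠ β : ℕ, (-1 : ℝ) ^ (α + β) •
    (fun p => totalDeriv m p)^[α] ((fun p => totalDeriv l p)^[β]
      (pderiv (I + α • Pi.single m 1 + β • Pi.single l 1) f))

/-- `g := δh/δv_x`, the variational derivative with respect to `v_x`. -/
noncomputable def gOf {N : ℕ} (x : Fin N) (h : DiffPoly N) : DiffPoly N :=
  varDeriv x (Pi.single x 1) h

/-- `a_{··} := Σ_α v_{x^α t_m} · (δh/δv_{x^{α+1}})`. -/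
noncomputable def aOf {N : ℕ} (x m : Fin N) (h : DiffPoly N) : DiffPoly N :=
  ∑ᶠ α : ℕ, X (α • Pi.single x 1 + Pi.single m 1) * varDeriv x ((α + 1) • Pi.single x 1) h

set_option linter.unusedSectionVars false

namespace Aux

variable {N : ℕ}

lemma tD_X (m : Fin N) (I : Fin N → ℕ) :
    totalDeriv m (X I) = X (I + Pi.single m 1) :=
  mkDerivation_X _ _ _

lemma pd_X (J I : Fin N → ℕ) :
    pderiv J (X I : DiffPoly N) = if I = J then 1 else 0 := by
  classical
  rcases eq_or_ne I J with h | h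
  · subst h; simp [pderiv_X_self]
  · simp [pderiv_X_of_ne h.symm, h]

/-- commutator of `pderiv J` and `totalDeriv m`, case `J m = 0`. -/
lemma pd_tD_of_zero (J : Fin N → ℕ) (m : Fin N) (h : J m = 0) (p : DiffPoly N) :
    pderiv J (totalDeriv m p) = totalDeriv m (pderiv J p) := by
  have key : ⁅(pderiv J : Derivation ℝ (DiffPoly N) (DiffPoly N)), totalDeriv m⁆ = 0 := by
    apply derivation_ext
    intro I
    rw [Derivation.commutator_apply]
    rw [tD_X, pd_X, pd_X]
    have hne : I + Pi.single m 1 ≠ J := by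
      intro he
      have := congrFun he m
      simp [h] at this
    rw [if_neg hne]
    rcases eq_or_ne I J with h2 | h2 <;> simp [h2]
  have := DFunLike.congr_fun key p
  simp only [Derivation.commutator_apply] at this
  simpa [sub_eq_zero] using this

/-- commutator of `pderiv J` and `totalDeriv m`, case `1 ≤ J m`. -/
lemma pd_tD_of_pos (J : Fin N → ℕ) (m : Fin N) (h : J m ≠ 0) (p : DiffPoly N) :
    pderiv J (totalDeriv m p)
      = totalDeriv m (pderiv J p) + pderiv (J - Pi.single m 1) p := by
  have key : ⁅(pderiv J : Derivation ℝ (DiffPoly N) (DiffPoly N)), totalDeriv m⁆ =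
      pderiv (J - Pi.single m 1) := by
    apply derivation_ext
    intro I
    rw [Derivation.commutator_apply]
    rw [tD_X, pd_X, pd_X, pd_X]
    have hiff : I + Pi.single m 1 = J ↔ I = J - Pi.single m 1 := by
      constructor
      · intro he; funext l
        have := congrFun he l
        simp only [Pi.add_apply, Pi.sub_apply] at this ⊢
        rcases eq_or_ne l m with rfl | hl
        · simp only [Pi.single_eq_same] at this ⊢; omega
        · simp only [Pi.single_eq_of_ne hl] at this ⊢; omega
      · intro he; funext l
        have := congrFun he l
        simp only [Pi.add_apply, Pi.sub_apply] at this ⊢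
        rcases eq_or_ne l m with rfl | hl
        · simp only [Pi.single_eq_same] at this ⊢; omega
        · simp only [Pi.single_eq_of_ne hl] at this ⊢; omega
    have hD : totalDeriv m (if I = J then (1:DiffPoly N) else 0) = 0 := by
      split <;> simp
    rw [hD, sub_zero]
    exact if_congr hiff rfl rfl
  have := DFunLike.congr_fun key p
  simp only [Derivation.commutator_apply] at this
  linear_combination this

lemma pd_pd_comm (J K : Fin N → ℕ) (p : DiffPoly N) :
    pderiv J (pderiv K p) = pderiv K (pderiv J p) := by
  have key : ⁅(pderiv J : Derivation ℝ (DiffPoly N) (DiffPoly N)),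
      (pderiv K : Derivation ℝ (DiffPoly N) (DiffPoly N))⁆ = 0 := by
    apply derivation_ext
    intro I
    rw [Derivation.commutator_apply, pd_X, pd_X]
    have e1 : (pderiv J) (if I = K then (1:DiffPoly N) else 0) = 0 := by split <;> simp
    have e2 : (pderiv K) (if I = J then (1:DiffPoly N) else 0) = 0 := by split <;> simp
    simp [e1, e2]
  have := DFunLike.congr_fun key p
  simp only [Derivation.commutator_apply] at this
  simpa [sub_eq_zero] using this

end Aux

namespace Aux2
open Aux Function

variable {N : ℕ}

/-- pderiv as an AddMonoidHom -/
def pdh (J : Fin N → ℕ) : DiffPoly N →+ DiffPoly N :=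
  LinearMap.toAddMonoidHom ((pderiv J : Derivation ℝ (DiffPoly N) (DiffPoly N)) :
    DiffPoly N →ₗ[ℝ] DiffPoly N)

lemma pdh_apply (J : Fin N → ℕ) (p : DiffPoly N) : pdh J p = pderiv J p := rfl

def tDh (m : Fin N) : DiffPoly N →+ DiffPoly N :=
  LinearMap.toAddMonoidHom ((totalDeriv m : Derivation ℝ (DiffPoly N) (DiffPoly N)) :
    DiffPoly N →ₗ[ℝ] DiffPoly N)

lemma tDh_apply (m : Fin N) (p : DiffPoly N) : tDh m p = totalDeriv m p := rfl

lemma iterD_zero (m : Fin N) (α : ℕ) : (fun p => totalDeriv m p)^[α] (0 : DiffPoly N) = 0 :=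
  Function.iterate_fixed (by simp) α

lemma iterD_add (m : Fin N) (α : ℕ) (p q : DiffPoly N) :
    (fun p => totalDeriv m p)^[α] (p + q)
      = (fun p => totalDeriv m p)^[α] p + (fun p => totalDeriv m p)^[α] q := by
  induction α generalizing p q with
  | zero => simp
  | succ n ih => simp only [Function.iterate_succ_apply, map_add, ih]

lemma iterD_neg (m : Fin N) (α : ℕ) (p : DiffPoly N) :
    (fun p => totalDeriv m p)^[α] (-p) = -(fun p => totalDeriv m p)^[α] p := by
  induction α generalizing p with
  | zero => simp
  | succ n ih => simp only [Function.iterate_succ_apply, map_neg, ih]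

lemma iterD_sub (m : Fin N) (α : ℕ) (p q : DiffPoly N) :
    (fun p => totalDeriv m p)^[α] (p - q)
      = (fun p => totalDeriv m p)^[α] p - (fun p => totalDeriv m p)^[α] q := by
  simp [sub_eq_add_neg, iterD_add, iterD_neg]

lemma iterD_smul (m : Fin N) (α : ℕ) (c : ℝ) (p : DiffPoly N) :
    (fun p => totalDeriv m p)^[α] (c • p) = c • (fun p => totalDeriv m p)^[α] p := by
  induction α generalizing p with
  | zero => simp
  | succ n ih => simp only [Function.iterate_succ_apply, Derivation.map_smul, ih]

/-- "Depends only on x-derivatives of v": all partials in directions involving a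
non-x index vanish. -/
def XO (x : Fin N) (p : DiffPoly N) : Prop :=
  ∀ J : Fin N → ℕ, ∀ l : Fin N, l ≠ x → J l ≠ 0 → pderiv J p = 0

lemma XO_zero (x : Fin N) : XO x (0 : DiffPoly N) := by intro J l _ _; simp

lemma XO_add {x : Fin N} {p q : DiffPoly N} (hp : XO x p) (hq : XO x q) : XO x (p + q) := by
  intro J l h1 h2; rw [map_add, hp J l h1 h2, hq J l h1 h2, add_zero]

lemma XO_neg {x : Fin N} {p : DiffPoly N} (hp : XO x p) : XO x (-p) := by
  intro J l h1 h2; rw [map_neg, hp J l h1 h2, neg_zero]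

lemma XO_sub {x : Fin N} {p q : DiffPoly N} (hp : XO x p) (hq : XO x q) : XO x (p - q) := by
  intro J l h1 h2; rw [map_sub, hp J l h1 h2, hq J l h1 h2, sub_zero]

lemma XO_smul {x : Fin N} (c : ℝ) {p : DiffPoly N} (hp : XO x p) : XO x (c • p) := by
  intro J l h1 h2; rw [Derivation.map_smul, hp J l h1 h2, smul_zero]

lemma XO_mul {x : Fin N} {p q : DiffPoly N} (hp : XO x p) (hq : XO x q) : XO x (p * q) := by
  intro J l h1 h2; rw [pderiv_mul, hp J l h1 h2, hq J l h1 h2, zero_mul, mul_zero, add_zero]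

lemma XO_X {x : Fin N} (γ : ℕ) : XO x (X (γ • Pi.single x 1) : DiffPoly N) := by
  intro J l h1 h2
  rw [pd_X, if_neg]
  intro he
  apply h2
  rw [← he, Pi.smul_apply, Pi.single_eq_of_ne h1, smul_eq_mul, mul_zero]

lemma XO_pd {x : Fin N} (K : Fin N → ℕ) {p : DiffPoly N} (hp : XO x p) : XO x (pderiv K p) := by
  intro J l h1 h2
  rw [pd_pd_comm, hp J l h1 h2, map_zero]

lemma XO_tD {x : Fin N} {p : DiffPoly N} (hp : XO x p) : XO x (totalDeriv x p) := by
  intro J l h1 h2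
  rcases Nat.eq_zero_or_pos (J x) with h0 | h0
  · rw [pd_tD_of_zero _ _ h0, hp J l h1 h2, map_zero]
  · rw [pd_tD_of_pos _ _ (by omega), hp J l h1 h2, map_zero, zero_add]
    apply hp _ l h1
    simpa [Pi.single_eq_of_ne h1] using h2

lemma XO_iterD {x : Fin N} (α : ℕ) {p : DiffPoly N} (hp : XO x p) :
    XO x ((fun p => totalDeriv x p)^[α] p) := by
  induction α generalizing p with
  | zero => simpa
  | succ n ih => rw [Function.iterate_succ_apply]; exact ih (XO_tD hp)

lemma XO_finsum {x : Fin N} {f : ℕ → DiffPoly N} (hf : ∀ α, XO x (f α)) :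
    XO x (∑ᶠ α, f α) := by
  intro J l h1 h2
  by_cases hfin : (Function.support f).Finite
  · rw [← pdh_apply, AddMonoidHom.map_finsum _ hfin]
    exact finsum_eq_zero_of_forall_eq_zero fun α => hf α J l h1 h2
  · rw [finsum_of_infinite_support hfin, map_zero]

end Aux2

namespace Aux3
open Aux Aux2 Function

variable {N : ℕ}

/-- single term of `varDeriv` -/
def T1 (x : Fin N) (I : Fin N → ℕ) (f : DiffPoly N) (α : ℕ) : DiffPoly N :=
  (-1 : ℝ) ^ α • (fun p => totalDeriv x p)^[α] (pderiv (I + α • Pi.single x 1) f)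

lemma varDeriv_def (x : Fin N) (I : Fin N → ℕ) (f : DiffPoly N) :
    varDeriv x I f = ∑ᶠ α, T1 x I f α := rfl

/-- single term of `varDeriv2` -/
def T2 (m l : Fin N) (I : Fin N → ℕ) (f : DiffPoly N) (α β : ℕ) : DiffPoly N :=
  (-1 : ℝ) ^ (α + β) •
    (fun p => totalDeriv m p)^[α] ((fun p => totalDeriv l p)^[β]
      (pderiv (I + α • Pi.single m 1 + β • Pi.single l 1) f))

lemma varDeriv2_def (m l : Fin N) (I : Fin N → ℕ) (f : DiffPoly N) :
    varDeriv2 m l I f = ∑ᶠ α, ∑ᶠ β, T2 m l I f α β := rfl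

lemma T1_eq_zero {x : Fin N} {I : Fin N → ℕ} {f : DiffPoly N} {α : ℕ}
    (h : pderiv (I + α • Pi.single x 1) f = 0) : T1 x I f α = 0 := by
  rw [T1, h, iterD_zero, smul_zero]

lemma T2_eq_zero {m l : Fin N} {I : Fin N → ℕ} {f : DiffPoly N} {α β : ℕ}
    (h : pderiv (I + α • Pi.single m 1 + β • Pi.single l 1) f = 0) : T2 m l I f α β = 0 := by
  rw [T2, h, iterD_zero, iterD_zero, smul_zero]

lemma supp_pd_fin (I K : Fin N → ℕ) (m : Fin N) (hK : K m ≠ 0) (f : DiffPoly N) :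
    (Function.support fun α : ℕ => pderiv (I + α • K) f).Finite := by
  have hinj : Function.Injective fun α : ℕ => I m + α * K m := by
    intro a b hab
    simp only at hab
    have h2 : a * K m = b * K m := by omega
    exact Nat.eq_of_mul_eq_mul_right (Nat.pos_of_ne_zero hK) h2
  apply Set.Finite.subset
    (Set.Finite.preimage hinj.injOn
      (Set.Finite.image (fun J : Fin N → ℕ => J m) f.vars.finite_toSet))
  intro α hα
  have hmem : I + α • K ∈ f.vars := by
    by_contra hc
    exact hα (pderiv_eq_zero_of_notMem_vars hc)
  exact ⟨I + α • K, hmem, rfl⟩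

lemma supp_T1_fin (x : Fin N) (I : Fin N → ℕ) (f : DiffPoly N) :
    (Function.support (T1 x I f)).Finite := by
  apply Set.Finite.subset (supp_pd_fin I (Pi.single x 1) x (by simp) f)
  intro α hα
  simp only [Function.mem_support] at hα ⊢
  intro hc; exact hα (T1_eq_zero hc)

lemma supp_T2_inner_fin (m l : Fin N) (I : Fin N → ℕ) (f : DiffPoly N) (α : ℕ) :
    (Function.support (T2 m l I f α)).Finite := by
  apply Set.Finite.subset
    (supp_pd_fin (I + α • Pi.single m 1) (Pi.single l 1) l (by simp) f)
  intro β hβ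
  simp only [Function.mem_support] at hβ ⊢
  intro hc; exact hβ (T2_eq_zero hc)

lemma supp_T2_outer_fin (m l : Fin N) (hml : m ≠ l) (I : Fin N → ℕ) (f : DiffPoly N) :
    (Function.support fun α => ∑ᶠ β, T2 m l I f α β).Finite := by
  have hinj : Function.Injective fun α : ℕ => I m + α := fun a b hab => by
    simp only at hab; omega
  apply Set.Finite.subset
    (Set.Finite.preimage hinj.injOn
      (Set.Finite.image (fun J : Fin N → ℕ => J m) f.vars.finite_toSet))
  intro α hα
  simp only [Function.mem_support] at hα
  have : ∃ β, T2 m l I f α β ≠ 0 := by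
    by_contra hc
    push_neg at hc
    exact hα (finsum_eq_zero_of_forall_eq_zero hc)
  obtain ⟨β, hβ⟩ := this
  have hmem : I + α • Pi.single m 1 + β • Pi.single l 1 ∈ f.vars := by
    by_contra hc
    exact hβ (T2_eq_zero (pderiv_eq_zero_of_notMem_vars hc))
  refine ⟨I + α • Pi.single m 1 + β • Pi.single l 1, hmem, ?_⟩
  simp [Pi.single_eq_of_ne hml]

lemma varDeriv2_collapse (m l : Fin N) (I : Fin N → ℕ) (f : DiffPoly N)
    (h : ∀ α β : ℕ, β ≠ 0 → pderiv (I + α • Pi.single m 1 + β • Pi.single l 1) f = 0) :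
    varDeriv2 m l I f = ∑ᶠ α, T1 m I f α := by
  rw [varDeriv2_def]
  apply finsum_congr
  intro α
  rw [finsum_eq_single _ 0 (fun β hβ => T2_eq_zero (h α β hβ))]
  rw [T2, T1]
  simp

lemma varDeriv2_sub (m l : Fin N) (hml : m ≠ l) (I : Fin N → ℕ) (f g : DiffPoly N) :
    varDeriv2 m l I (f - g) = varDeriv2 m l I f - varDeriv2 m l I g := by
  have hterm : ∀ α β, T2 m l I (f - g) α β = T2 m l I f α β - T2 m l I g α β := by
    intro α β
    rw [T2, T2, T2, map_sub, iterD_sub, iterD_sub, smul_sub]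
  rw [varDeriv2_def, varDeriv2_def, varDeriv2_def]
  rw [← finsum_sub_distrib (supp_T2_outer_fin m l hml I f) (supp_T2_outer_fin m l hml I g)]
  apply finsum_congr
  intro α
  rw [← finsum_sub_distrib (supp_T2_inner_fin m l I f α) (supp_T2_inner_fin m l I g α)]
  exact finsum_congr fun β => hterm α β

lemma finsum_shift (f : ℕ → DiffPoly N) (h0 : f 0 = 0) (hf : (Function.support f).Finite) :
    ∑ᶠ α, f α = ∑ᶠ α, f (α + 1) := by
  set n := hf.toFinset.sup id + 1 with hn
  have hsub : Function.support f ⊆ ↑(Finset.range n) := by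
    intro a ha
    simp only [Finset.coe_range, Set.mem_Iio]
    have : a ∈ hf.toFinset := hf.mem_toFinset.2 ha
    have := Finset.le_sup (f := id) this
    simp only [id] at this
    omega
  have hsub2 : Function.support (fun α => f (α + 1)) ⊆ ↑(Finset.range n) := by
    intro a ha
    simp only [Function.mem_support] at ha
    have : a + 1 ∈ Finset.range n := hsub ha
    simp only [Finset.coe_range, Set.mem_Iio, Finset.mem_range] at this ⊢
    omega
  rw [finsum_eq_sum_of_support_subset f (s := Finset.range (n + 1))
      (hsub.trans (by simp [Finset.range_subset])),
    finsum_eq_sum_of_support_subset _ hsub2, Finset.sum_range_succ', h0, add_zero]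

end Aux3

namespace Aux4
open Aux Aux2 Aux3 Function

variable {N : ℕ}

lemma pd_adjoin {x : Fin N} {H : DiffPoly N}
    (hdep : H ∈ Algebra.adjoin ℝ
      {p : DiffPoly N | ∃ α : ℕ, 1 ≤ α ∧ p = X (α • Pi.single x 1)})
    {J : Fin N → ℕ} (hJ : ∀ γ : ℕ, 1 ≤ γ → J ≠ γ • Pi.single x 1) : pderiv J H = 0 := by
  induction hdep using Algebra.adjoin_induction with
  | mem p hp =>
    obtain ⟨γ, hγ, rfl⟩ := hp
    rw [pd_X, if_neg]
    intro he
    exact hJ γ hγ he.symm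
  | algebraMap r => exact Derivation.map_algebraMap _ r
  | add a b _ _ ha hb => rw [map_add, ha, hb, add_zero]
  | mul a b _ _ ha hb => rw [pderiv_mul, ha, hb, zero_mul, mul_zero, add_zero]

lemma XO_adjoin {x : Fin N} {H : DiffPoly N}
    (hdep : H ∈ Algebra.adjoin ℝ
      {p : DiffPoly N | ∃ α : ℕ, 1 ≤ α ∧ p = X (α • Pi.single x 1)}) : XO x H := by
  intro J l h1 h2
  apply pd_adjoin hdep
  intro γ _ he
  apply h2
  rw [he, Pi.smul_apply, Pi.single_eq_of_ne h1, smul_eq_mul, mul_zero]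

lemma pd_zero_adjoin {x : Fin N} {H : DiffPoly N}
    (hdep : H ∈ Algebra.adjoin ℝ
      {p : DiffPoly N | ∃ α : ℕ, 1 ≤ α ∧ p = X (α • Pi.single x 1)}) :
    pderiv (0 : Fin N → ℕ) H = 0 := by
  apply pd_adjoin hdep
  intro γ hγ he
  have := congrFun he x
  simp [Pi.single_eq_same] at this
  omega

lemma XO_T1 {x : Fin N} (I : Fin N → ℕ) {H : DiffPoly N} (hH : XO x H) (α : ℕ) :
    XO x (T1 x I H α) :=
  XO_smul _ (XO_iterD _ (XO_pd _ hH))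

lemma XO_varDeriv {x : Fin N} (I : Fin N → ℕ) {H : DiffPoly N} (hH : XO x H) :
    XO x (varDeriv x I H) :=
  XO_finsum (XO_T1 I hH)

lemma XO_gOf {x : Fin N} {H : DiffPoly N} (hH : XO x H) : XO x (gOf x H) :=
  XO_varDeriv _ hH

/-- for large `γ`, the `varDeriv` appearing in `aOf` vanishes -/
lemma supp_aOf_fin (x : Fin N) (m : Fin N) (H : DiffPoly N) :
    (Function.support fun γ : ℕ =>
      X (γ • Pi.single x 1 + Pi.single m 1) * varDeriv x ((γ + 1) • Pi.single x 1) H).Finite := by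
  obtain ⟨n, hn⟩ : ∃ n, H.vars.sup (fun J => J x) = n := ⟨_, rfl⟩
  apply Set.Finite.subset (Finset.range (n + 1)).finite_toSet
  intro γ hγ
  rw [Function.mem_support] at hγ
  simp only [Finset.coe_range, Set.mem_Iio]
  by_contra hc
  push_neg at hc
  apply hγ
  have hv : varDeriv x ((γ + 1) • Pi.single x 1) H = 0 := by
    apply finsum_eq_zero_of_forall_eq_zero
    intro α
    apply T1_eq_zero
    apply pderiv_eq_zero_of_notMem_vars
    intro hmem
    have h1 : (((γ + 1) • Pi.single x 1 + α • Pi.single x 1 : Fin N → ℕ)) x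
        ≤ H.vars.sup (fun J => J x) :=
      Finset.le_sup (f := fun J : Fin N → ℕ => J x) hmem
    rw [hn] at h1
    simp only [Pi.add_apply, Pi.smul_apply, Pi.single_eq_same, smul_eq_mul, mul_one] at h1
    clear hγ hn
    omega
  show X (γ • Pi.single x 1 + Pi.single m 1) * varDeriv x ((γ + 1) • Pi.single x 1) H = 0
  rw [hv, mul_zero]

lemma pd_aOf (x m : Fin N) (J : Fin N → ℕ) (H : DiffPoly N) :
    pderiv J (aOf x m H)
      = ∑ᶠ γ : ℕ, pderiv J
          (X (γ • Pi.single x 1 + Pi.single m 1) * varDeriv x ((γ + 1) • Pi.single x 1) H) := by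
  rw [aOf, ← pdh_apply, AddMonoidHom.map_finsum _ (supp_aOf_fin x m H)]
  rfl

end Aux4

namespace Aux5
open Aux Aux2 Aux3 Aux4 Function

variable {N : ℕ}

lemma vd2_H_ex {x i : Fin N} (hix : i ≠ x) {H : DiffPoly N}
    (hdep : H ∈ Algebra.adjoin ℝ
      {p : DiffPoly N | ∃ α : ℕ, 1 ≤ α ∧ p = X (α • Pi.single x 1)}) :
    varDeriv2 x i (Pi.single x 1) H = gOf x H := by
  rw [varDeriv2_collapse x i (Pi.single x 1) H ?_]
  · rfl
  · intro α β hβ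
    apply pd_adjoin hdep
    intro γ _ he
    have h := congrFun he i
    simp only [Pi.add_apply, Pi.smul_apply, Pi.single_eq_same, Pi.single_eq_of_ne hix,
      smul_eq_mul, mul_one, mul_zero, add_zero, zero_add] at h
    omega

lemma vd2_H_zero {x i : Fin N} (hix : i ≠ x) {H : DiffPoly N}
    (hdep : H ∈ Algebra.adjoin ℝ
      {p : DiffPoly N | ∃ α : ℕ, 1 ≤ α ∧ p = X (α • Pi.single x 1)}) :
    varDeriv2 x i 0 H = - totalDeriv x (gOf x H) := by
  rw [varDeriv2_collapse x i 0 H ?_]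
  · have h0 : T1 x 0 H 0 = 0 := by
      apply T1_eq_zero
      have hidx : ((0 : Fin N → ℕ) + (0 : ℕ) • Pi.single x 1) = 0 := by simp
      rw [hidx]
      exact pd_zero_adjoin hdep
    rw [finsum_shift _ h0 (supp_T1_fin x 0 H)]
    have hterm : ∀ α : ℕ, T1 x 0 H (α + 1) = -(totalDeriv x (T1 x (Pi.single x 1) H α)) := by
      intro α
      have hidx : ((0 : Fin N → ℕ) + (α + 1) • Pi.single x 1)
          = Pi.single x 1 + α • Pi.single x 1 := by
        rw [zero_add, add_smul, one_smul, add_comm]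
      rw [T1, T1, hidx, Function.iterate_succ_apply', pow_succ, Derivation.map_smul]
      rw [mul_comm, mul_smul, neg_one_smul]
    rw [finsum_congr hterm, finsum_neg_distrib]
    congr 1
    rw [gOf, varDeriv_def, ← tDh_apply, AddMonoidHom.map_finsum _ (supp_T1_fin x (Pi.single x 1) H)]
    rfl
  · intro α β hβ
    apply pd_adjoin hdep
    intro γ _ he
    have h := congrFun he i
    simp only [Pi.add_apply, Pi.smul_apply, Pi.single_eq_same, Pi.single_eq_of_ne hix,
      smul_eq_mul, mul_one, mul_zero, add_zero, zero_add, Pi.zero_apply] at h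
    omega

end Aux5

namespace Aux6
open Aux Aux2 Aux3 Aux4 Function

variable {N : ℕ}

lemma ne_of_apply_ne' (u v : Fin N → ℕ) (l : Fin N) (h : u l ≠ v l) : u ≠ v :=
  fun he => h (congrFun he l)

section secf1

variable {x i : Fin N}

local notation "f1" => ((1/2:ℝ) • (X (Pi.single x 1) * X (Pi.single i 1)) : DiffPoly N)

lemma pd_f1 (J : Fin N → ℕ) :
    pderiv J f1
      = (1/2:ℝ) • ((if Pi.single x 1 = J then 1 else 0) * X (Pi.single i 1)
          + X (Pi.single x 1) * (if Pi.single i 1 = J then 1 else 0)) := by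
  rw [Derivation.map_smul, pderiv_mul, pd_X, pd_X]

lemma pd_f1_zero (J : Fin N → ℕ) (h1 : Pi.single x 1 ≠ J) (h2 : Pi.single i 1 ≠ J) :
    pderiv J f1 = 0 := by
  rw [pd_f1, if_neg h1, if_neg h2, zero_mul, mul_zero, add_zero, smul_zero]

variable (hix : i ≠ x)

include hix in
lemma vd2_f1_ex :
    varDeriv2 x i (Pi.single x 1) f1 = (1/2:ℝ) • X (Pi.single i 1) := by
  rw [varDeriv2_collapse x i (Pi.single x 1) f1 ?_]
  · rw [finsum_eq_single _ 0 ?_]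
    · rw [T1]
      have hidx : (Pi.single x 1 + (0:ℕ) • Pi.single x 1 : Fin N → ℕ) = Pi.single x 1 := by
        simp
      rw [hidx, pd_f1, if_pos rfl, if_neg, pow_zero, one_smul, Function.iterate_zero_apply,
        one_mul, mul_zero, add_zero]
      apply ne_of_apply_ne' _ _ x
      simp [Pi.single_eq_same, Pi.single_eq_of_ne hix.symm]
    · intro α hα
      apply T1_eq_zero
      apply pd_f1_zero
      · apply ne_of_apply_ne' _ _ x
        simp only [Pi.single_eq_same, Pi.add_apply, Pi.smul_apply, smul_eq_mul, mul_one]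
        omega
      · apply ne_of_apply_ne' _ _ x
        simp only [Pi.single_eq_same, Pi.add_apply, Pi.smul_apply, smul_eq_mul, mul_one,
          Pi.single_eq_of_ne hix.symm]
        omega
  · intro α β hβ
    apply pd_f1_zero
    · apply ne_of_apply_ne' _ _ i
      simp only [Pi.single_eq_same, Pi.add_apply, Pi.smul_apply, smul_eq_mul, mul_one,
        Pi.single_eq_of_ne hix]
      omega
    · apply ne_of_apply_ne' _ _ x
      simp only [Pi.single_eq_same, Pi.add_apply, Pi.smul_apply, smul_eq_mul, mul_one,
        Pi.single_eq_of_ne hix.symm]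
      omega

include hix in
lemma vd2_f1_zero :
    varDeriv2 x i 0 f1 = -X (Pi.single x 1 + Pi.single i 1) := by
  rw [varDeriv2_def]
  rw [finsum_eq_sum_of_support_subset _ (s := ({0, 1} : Finset ℕ)) ?_]
  · rw [Finset.sum_pair (by norm_num)]
    have hin0 : ∑ᶠ β, T2 x i 0 f1 0 β = -((1/2:ℝ) • X (Pi.single x 1 + Pi.single i 1)) := by
      rw [finsum_eq_single _ 1 ?_]
      · rw [T2]
        have hidx : ((0:Fin N → ℕ) + (0:ℕ) • Pi.single x 1 + (1:ℕ) • Pi.single i 1)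
            = Pi.single i 1 := by simp
        rw [hidx, pd_f1, if_pos rfl, if_neg, mul_one, zero_mul, zero_add]
        · simp only [Function.iterate_zero_apply, Function.iterate_one]
          rw [Derivation.map_smul, zero_add, tD_X, pow_one, neg_one_smul]
        · apply ne_of_apply_ne' _ _ x
          simp [Pi.single_eq_same, Pi.single_eq_of_ne hix.symm]
      · intro β hβ
        apply T2_eq_zero
        apply pd_f1_zero
        · apply ne_of_apply_ne' _ _ x
          simp only [Pi.single_eq_same, Pi.add_apply, Pi.smul_apply, smul_eq_mul, mul_one,
            Pi.single_eq_of_ne hix.symm, Pi.zero_apply]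
          omega
        · apply ne_of_apply_ne' _ _ i
          simp only [Pi.single_eq_same, Pi.add_apply, Pi.smul_apply, smul_eq_mul, mul_one,
            Pi.single_eq_of_ne hix, Pi.zero_apply]
          omega
    have hin1 : ∑ᶠ β, T2 x i 0 f1 1 β = -((1/2:ℝ) • X (Pi.single x 1 + Pi.single i 1)) := by
      rw [finsum_eq_single _ 0 ?_]
      · rw [T2]
        have hidx : ((0:Fin N → ℕ) + (1:ℕ) • Pi.single x 1 + (0:ℕ) • Pi.single i 1)
            = Pi.single x 1 := by simp
        rw [hidx, pd_f1, if_pos rfl, if_neg, mul_zero, one_mul, add_zero]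
        · simp only [Function.iterate_zero_apply, Function.iterate_one]
          rw [Derivation.map_smul, add_zero, tD_X, pow_one, neg_one_smul]
          rw [show (Pi.single i 1 + Pi.single x 1 : Fin N → ℕ)
              = Pi.single x 1 + Pi.single i 1 from add_comm _ _]
        · apply ne_of_apply_ne' _ _ x
          simp [Pi.single_eq_same, Pi.single_eq_of_ne hix.symm]
      · intro β hβ
        apply T2_eq_zero
        apply pd_f1_zero
        · apply ne_of_apply_ne' _ _ i
          simp only [Pi.single_eq_same, Pi.add_apply, Pi.smul_apply, smul_eq_mul, mul_one,
            Pi.single_eq_of_ne hix, Pi.zero_apply]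
          omega
        · apply ne_of_apply_ne' _ _ x
          simp only [Pi.single_eq_same, Pi.add_apply, Pi.smul_apply, smul_eq_mul, mul_one,
            Pi.single_eq_of_ne hix.symm, Pi.zero_apply]
          omega
    rw [hin0, hin1]
    module
  · intro α hα
    rw [Function.mem_support] at hα
    simp only [Finset.coe_insert, Finset.coe_singleton, Set.mem_insert_iff, Set.mem_singleton_iff]
    by_contra hc
    push_neg at hc
    apply hα
    apply finsum_eq_zero_of_forall_eq_zero
    intro β
    apply T2_eq_zero
    apply pd_f1_zero
    · apply ne_of_apply_ne' _ _ x
      simp only [Pi.single_eq_same, Pi.add_apply, Pi.smul_apply, smul_eq_mul, mul_one,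
        Pi.single_eq_of_ne hix.symm, Pi.zero_apply]
      omega
    · apply ne_of_apply_ne' _ _ x
      simp only [Pi.single_eq_same, Pi.add_apply, Pi.smul_apply, smul_eq_mul, mul_one,
        Pi.single_eq_of_ne hix.symm, Pi.zero_apply]
      omega

end secf1

end Aux6

namespace Aux7
open Aux Aux2 Aux3 Aux4 Aux6 Function

variable {N : ℕ}

lemma pd_aOf_eval {x m' : Fin N} (H : DiffPoly N) (hH : XO x H) (J : Fin N → ℕ)
    (l : Fin N) (hl : l ≠ x) (hJl : J l ≠ 0) :
    pderiv J (aOf x m' H)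
      = ∑ᶠ γ : ℕ, (if (γ • Pi.single x 1 + Pi.single m' 1 : Fin N → ℕ) = J then 1 else 0)
          * varDeriv x ((γ + 1) • Pi.single x 1) H := by
  rw [pd_aOf]
  apply finsum_congr
  intro γ
  rw [pderiv_mul, pd_X, XO_varDeriv _ hH J l hl hJl, mul_zero, add_zero]

lemma pd_aOf_zero {x m' : Fin N} (H : DiffPoly N) (hH : XO x H) (J : Fin N → ℕ)
    (l : Fin N) (hl : l ≠ x) (hJl : J l ≠ 0)
    (hcond : ∀ γ : ℕ, (γ • Pi.single x 1 + Pi.single m' 1 : Fin N → ℕ) ≠ J) :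
    pderiv J (aOf x m' H) = 0 := by
  rw [pd_aOf_eval H hH J l hl hJl]
  apply finsum_eq_zero_of_forall_eq_zero
  intro γ
  rw [if_neg (hcond γ), zero_mul]

lemma pd_aOf_ej {x j : Fin N} (hjx : j ≠ x) (H : DiffPoly N) (hH : XO x H) :
    pderiv (Pi.single j 1) (aOf x j H) = gOf x H := by
  rw [pd_aOf_eval H hH _ j hjx (by simp [Pi.single_eq_same])]
  rw [finsum_eq_single _ 0 ?_]
  · rw [if_pos (by simp), one_mul]
    norm_num [gOf]
  · intro γ hγ
    rw [if_neg, zero_mul]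
    apply ne_of_apply_ne' _ _ x
    simp only [Pi.add_apply, Pi.smul_apply, Pi.single_eq_same, smul_eq_mul, mul_one,
      Pi.single_eq_of_ne hjx]
    omega

/-- if `D_x q` depends only on x-derivatives, then so does `q` (up to constants):
all bad partials of `q` vanish. -/
lemma pd_of_D {x : Fin N} (q : DiffPoly N) (hq : XO x (totalDeriv x q))
    (J : Fin N → ℕ) (l : Fin N) (hl : l ≠ x) (hJl : J l ≠ 0) : pderiv J q = 0 := by
  obtain ⟨n, hn⟩ : ∃ n, q.vars.sup (fun K => K x) = n := ⟨_, rfl⟩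
  have top : ∀ k : ℕ, n + 1 ≤ k → pderiv (J + k • Pi.single x 1) q = 0 := by
    intro k hk
    apply pderiv_eq_zero_of_notMem_vars
    intro hmem
    have h1 : ((J + k • Pi.single x 1 : Fin N → ℕ)) x ≤ q.vars.sup (fun K => K x) :=
      Finset.le_sup (f := fun K : Fin N → ℕ => K x) hmem
    rw [hn] at h1
    simp only [Pi.add_apply, Pi.smul_apply, Pi.single_eq_same, smul_eq_mul, mul_one] at h1
    clear hq hn
    omega
  have step : ∀ k : ℕ, pderiv (J + (k + 1) • Pi.single x 1) q = 0 →
      pderiv (J + k • Pi.single x 1) q = 0 := by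
    intro k hk1
    have h2 := hq (J + (k + 1) • Pi.single x 1) l hl
      (by simp only [Pi.add_apply, Pi.smul_apply, Pi.single_eq_of_ne hl, smul_eq_mul,
        mul_zero, add_zero]; exact hJl)
    rw [pd_tD_of_pos _ _ (by simp [Pi.single_eq_same])] at h2
    rw [hk1, map_zero, zero_add] at h2
    have hidx : (J + (k + 1) • Pi.single x 1 - Pi.single x 1 : Fin N → ℕ)
        = J + k • Pi.single x 1 := by
      funext l'
      rcases eq_or_ne l' x with rfl | hl'
      · simp only [Pi.sub_apply, Pi.add_apply, Pi.smul_apply, Pi.single_eq_same, smul_eq_mul,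
          mul_one]
        clear hq hn top
        omega
      · simp [Pi.single_eq_of_ne hl']
    rw [hidx] at h2
    exact h2
  have all : ∀ d k : ℕ, n + 1 ≤ k + d → pderiv (J + k • Pi.single x 1) q = 0 := by
    intro d
    induction d with
    | zero => intro k hk; exact top k (by rwa [Nat.add_zero] at hk)
    | succ d ih =>
      intro k hk
      by_cases hk2 : n + 1 ≤ k
      · exact top k hk2
      · refine step k (ih (k + 1) ?_)
        rw [Nat.succ_add]
        rwa [Nat.add_succ] at hk
  have := all (n + 1) 0 ((Nat.zero_add (n + 1)).symm.le)
  simpa using this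

end Aux7

namespace Aux8
open Aux Aux2 Aux3 Aux4 Aux6 Aux7 Function

variable {N : ℕ}

section JV

variable {x i j : Fin N} (hi : i ≠ x) (hj : j ≠ x) (hij : i ≠ j) (α β : ℕ)

local notation "Jv" => (Pi.single j 1 + α • Pi.single i 1 + β • Pi.single j 1 : Fin N → ℕ)

include hi hj in
lemma Jv_x : Jv x = 0 := by
  simp [Pi.single_eq_of_ne (Ne.symm hi), Pi.single_eq_of_ne (Ne.symm hj)]

include hij in
lemma Jv_i : Jv i = α := by
  simp [Pi.single_eq_same, Pi.single_eq_of_ne hij]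

include hij in
lemma Jv_j : Jv j = 1 + β := by
  simp [Pi.single_eq_same, Pi.single_eq_of_ne (Ne.symm hij), add_comm]

include hij in
lemma Jv_j_ne : Jv j ≠ 0 := by
  rw [Jv_j hij]
  omega

include hij in
lemma ei_ne_Jv : Pi.single i 1 ≠ Jv := by
  apply ne_of_apply_ne' _ _ j
  rw [Jv_j hij, Pi.single_eq_of_ne (Ne.symm hij)]
  omega

include hij in
lemma ej_ne_Jv (hαβ : ¬(α = 0 ∧ β = 0)) : Pi.single j 1 ≠ Jv := by
  rcases Nat.eq_zero_or_pos α with rfl | hα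
  · apply ne_of_apply_ne' _ _ j
    rw [Jv_j hij, Pi.single_eq_same]
    omega
  · apply ne_of_apply_ne' _ _ i
    rw [Jv_i hij, Pi.single_eq_of_ne hij]
    omega

include hi hj hij in
lemma exj_ne_Jv (hαβ : ¬(α = 0 ∧ β = 0)) (γ : ℕ) :
    (γ • Pi.single x 1 + Pi.single j 1 : Fin N → ℕ) ≠ Jv := by
  rcases Nat.eq_zero_or_pos γ with rfl | hγ
  · rcases Nat.eq_zero_or_pos α with rfl | hα
    · apply ne_of_apply_ne' _ _ j
      rw [Jv_j hij]
      simp [Pi.single_eq_same, Pi.single_eq_of_ne (Ne.symm hj)]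
      omega
    · apply ne_of_apply_ne' _ _ i
      rw [Jv_i hij]
      simp [Pi.single_eq_of_ne hij, Pi.single_eq_of_ne hi]
      omega
  · apply ne_of_apply_ne' _ _ x
    rw [Jv_x hi hj]
    simp [Pi.single_eq_same, Pi.single_eq_of_ne (Ne.symm hj)]
    omega

include hi hj hij in
lemma exi_ne_Jv (γ : ℕ) :
    (γ • Pi.single x 1 + Pi.single i 1 : Fin N → ℕ) ≠ Jv := by
  apply ne_of_apply_ne' _ _ j
  rw [Jv_j hij]
  simp [Pi.single_eq_of_ne (Ne.symm hij), Pi.single_eq_of_ne hj]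
  omega

end JV

end Aux8

namespace Aux9
open Aux Aux2 Aux3 Aux4 Aux5 Aux6 Aux7 Aux8 Function

variable {N : ℕ}

lemma partB (x i j : Fin N) (hi : i ≠ x) (hj : j ≠ x) (hij : i ≠ j)
    (Hi Hj : DiffPoly N)
    (hdepi : Hi ∈ Algebra.adjoin ℝ
      {p : DiffPoly N | ∃ α : ℕ, 1 ≤ α ∧ p = X (α • Pi.single x 1)})
    (hdepj : Hj ∈ Algebra.adjoin ℝ
      {p : DiffPoly N | ∃ α : ℕ, 1 ≤ α ∧ p = X (α • Pi.single x 1)})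
    (bij bji : DiffPoly N)
    (hbij : totalDeriv x bij = totalDeriv x (gOf x Hi) * gOf x Hj)
    (hbji : totalDeriv x bji = totalDeriv x (gOf x Hj) * gOf x Hi) :
    varDeriv2 i j (Pi.single j 1)
        (-((1 / 2 : ℝ) •
            (X (Pi.single i 1) * gOf x Hj - X (Pi.single j 1) * gOf x Hi)
          + (aOf x j Hi - aOf x i Hj) - (1 / 2 : ℝ) • (bij - bji)))
      = -((1 / 2 : ℝ) • gOf x Hi) := by
  have hXOi : XO x Hi := XO_adjoin hdepi
  have hXOj : XO x Hj := XO_adjoin hdepj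
  have hgi : XO x (gOf x Hi) := XO_gOf hXOi
  have hgj : XO x (gOf x Hj) := XO_gOf hXOj
  have key : ∀ α β : ℕ,
      pderiv (Pi.single j 1 + α • Pi.single i 1 + β • Pi.single j 1)
        (-((1 / 2 : ℝ) •
            (X (Pi.single i 1) * gOf x Hj - X (Pi.single j 1) * gOf x Hi)
          + (aOf x j Hi - aOf x i Hj) - (1 / 2 : ℝ) • (bij - bji)))
      = if α = 0 ∧ β = 0 then -((1 / 2 : ℝ) • gOf x Hi) else 0 := by
    intro α β
    have hJne : (Pi.single j 1 + α • Pi.single i 1 + β • Pi.single j 1 : Fin N → ℕ) j ≠ 0 :=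
      Jv_j_ne hij α β
    have hP1 : pderiv (Pi.single j 1 + α • Pi.single i 1 + β • Pi.single j 1)
        (X (Pi.single i 1) * gOf x Hj) = 0 := by
      rw [pderiv_mul, pd_X, hgj _ j hj hJne, mul_zero, add_zero,
        if_neg (ei_ne_Jv hij α β), zero_mul]
    have hP2 : pderiv (Pi.single j 1 + α • Pi.single i 1 + β • Pi.single j 1)
        (X (Pi.single j 1) * gOf x Hi)
        = if α = 0 ∧ β = 0 then gOf x Hi else 0 := by
      rw [pderiv_mul, pd_X, hgi _ j hj hJne, mul_zero, add_zero]
      by_cases hc : α = 0 ∧ β = 0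
      · obtain ⟨rfl, rfl⟩ := hc
        rw [if_pos (by simp), if_pos ⟨rfl, rfl⟩, one_mul]
      · rw [if_neg (ej_ne_Jv hij α β hc), if_neg hc, zero_mul]
    have ha1 : pderiv (Pi.single j 1 + α • Pi.single i 1 + β • Pi.single j 1)
        (aOf x j Hi) = if α = 0 ∧ β = 0 then gOf x Hi else 0 := by
      by_cases hc : α = 0 ∧ β = 0
      · obtain ⟨rfl, rfl⟩ := hc
        rw [if_pos ⟨rfl, rfl⟩]
        have hidx : (Pi.single j 1 + (0:ℕ) • Pi.single i 1 + (0:ℕ) • Pi.single j 1 : Fin N → ℕ)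
            = Pi.single j 1 := by simp
        rw [hidx]
        exact pd_aOf_ej hj Hi hXOi
      · rw [if_neg hc]
        exact pd_aOf_zero Hi hXOi _ j hj hJne (fun γ => exj_ne_Jv hi hj hij α β hc γ)
    have ha2 : pderiv (Pi.single j 1 + α • Pi.single i 1 + β • Pi.single j 1)
        (aOf x i Hj) = 0 :=
      pd_aOf_zero Hj hXOj _ j hj hJne (fun γ => exi_ne_Jv hi hj hij α β γ)
    have hbij0 : pderiv (Pi.single j 1 + α • Pi.single i 1 + β • Pi.single j 1) bij = 0 := by
      apply pd_of_D bij _ _ j hj hJne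
      rw [hbij]
      exact XO_mul (XO_tD hgi) hgj
    have hbji0 : pderiv (Pi.single j 1 + α • Pi.single i 1 + β • Pi.single j 1) bji = 0 := by
      apply pd_of_D bji _ _ j hj hJne
      rw [hbji]
      exact XO_mul (XO_tD hgj) hgi
    rw [map_neg, map_sub, map_add, Derivation.map_smul, Derivation.map_smul, map_sub,
      map_sub, map_sub, hP1, hP2, ha1, ha2, hbij0, hbji0]
    by_cases hc : α = 0 ∧ β = 0
    · simp only [if_pos hc]
      module
    · simp only [if_neg hc]
      simp
  rw [varDeriv2_def]
  rw [finsum_eq_single _ 0 ?_]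
  · rw [finsum_eq_single _ 0 ?_]
    · rw [T2]
      simp only [Nat.add_zero, pow_zero, one_smul, Function.iterate_zero_apply]
      rw [key 0 0, if_pos ⟨rfl, rfl⟩]
    · intro β hβ
      apply T2_eq_zero
      rw [key 0 β, if_neg (by tauto)]
  · intro α hα
    apply finsum_eq_zero_of_forall_eq_zero
    intro β
    apply T2_eq_zero
    rw [key α β, if_neg (by tauto)]

end Aux9

/-- (i) `δ_{1i}L_{1i}/δv = −v_{x t_i} + D_x(g_i)`, so the multi-time
Euler–Lagrange equation `δ_{1i}L_{1i}/δv = 0` is the differentiated potential KdV equation;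
(ii) `δ_{1i}L_{1i}/δv_x − δ_{ij}L_{ji}/δv_{t_j} = ½(v_{t_i} − g_i)`, so the multi-time
Euler–Lagrange equation `δ_{1i}L_{1i}/δv_x = δ_{ij}L_{ji}/δv_{t_j}` is exactly the potential
KdV equation `v_{t_i} = g_i`. -/
theorem stmt_16 (N : ℕ) (hN : 2 ≤ N) (x : Fin N) (hx : x = ⟨0, by omega⟩)
    (i j : Fin N) (hi : i ≠ x) (hj : j ≠ x) (hij : i ≠ j)
    (Hi Hj : DiffPoly N)
    (hdepi : Hi ∈ Algebra.adjoin ℝ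
      {p : DiffPoly N | ∃ α : ℕ, 1 ≤ α ∧ p = X (α • Pi.single x 1)})
    (hdepj : Hj ∈ Algebra.adjoin ℝ
      {p : DiffPoly N | ∃ α : ℕ, 1 ≤ α ∧ p = X (α • Pi.single x 1)})
    (bij bji : DiffPoly N)
    (hbij : totalDeriv x bij = totalDeriv x (gOf x Hi) * gOf x Hj)
    (hbji : totalDeriv x bji = totalDeriv x (gOf x Hj) * gOf x Hi) :
    varDeriv2 x i 0 ((1 / 2 : ℝ) • (X (Pi.single x 1) * X (Pi.single i 1)) - Hi)
        = -X (Pi.single x 1 + Pi.single i 1) + totalDeriv x (gOf x Hi)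
    ∧
    varDeriv2 x i (Pi.single x 1)
          ((1 / 2 : ℝ) • (X (Pi.single x 1) * X (Pi.single i 1)) - Hi)
        - varDeriv2 i j (Pi.single j 1)
            (-((1 / 2 : ℝ) •
                (X (Pi.single i 1) * gOf x Hj - X (Pi.single j 1) * gOf x Hi)
              + (aOf x j Hi - aOf x i Hj) - (1 / 2 : ℝ) • (bij - bji)))
      = (1 / 2 : ℝ) • (X (Pi.single i 1) - gOf x Hi) := by
  constructor
  · rw [Aux3.varDeriv2_sub x i (Ne.symm hi) 0 _ Hi, Aux6.vd2_f1_zero hi,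
      Aux5.vd2_H_zero hi hdepi, sub_neg_eq_add]
  · rw [Aux3.varDeriv2_sub x i (Ne.symm hi) (Pi.single x 1) _ Hi, Aux6.vd2_f1_ex hi,
      Aux5.vd2_H_ex hi hdepi,
      Aux9.partB x i j hi hj hij Hi Hj hdepi hdepj bij bji hbij hbji]
    module
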